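/- Let G be a triangle-free finite simple graph with a transitive vertex ordering < and let M be a matching in G. Then the following are equivalent: (1) M is uniquely restricted; (2) there is no alternating cycle of length 4 with respect to M in G; (3) for any two distinct edges e, e' ∈ M, the matching {e, e'} is uniquely restricted in G. -/

import Mathlib

/-- The set of vertices matched by a set of edges `M`. -/
def matchedVerts {V : Type*} (M : Set (Sym2 V)) : Set V := {v | ∃ e ∈ M, v ∈ e}

/-- `M` is a matching in the simple graph `G`: a set of edges of `G` no two of which
share an endpoint. -/
def IsMatchingSet {V : Type*} (G : SimpleGraph V) (M : Set (Sym2 V)) : Prop :=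
  M ⊆ G.edgeSet ∧ ∀ e ∈ M, ∀ f ∈ M, e ≠ f → ∀ v : V, v ∈ e → v ∉ f

/-- `M` is a uniquely restricted matching in `G`: a matching such that no other matching
of `G` matches exactly the same set of vertices. -/
def UniquelyRestricted {V : Type*} (G : SimpleGraph V) (M : Set (Sym2 V)) : Prop :=
  IsMatchingSet G M ∧
    ∀ M' : Set (Sym2 V), IsMatchingSet G M' → matchedVerts M' = matchedVerts M → M' = M

/-- The smaller endpoint `l(e)` of an edge `e`. -/
def eL {V : Type*} [LinearOrder V] (e : Sym2 V) : V :=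
  Sym2.lift ⟨fun a b => min a b, fun a b => min_comm a b⟩ e

/-- The larger endpoint `r(e)` of an edge `e`. -/
def eR {V : Type*} [LinearOrder V] (e : Sym2 V) : V :=
  Sym2.lift ⟨fun a b => max a b, fun a b => max_comm a b⟩ e

/-- The linear order on `V` is a proper vertex ordering of `G`:
for `u < v < w`, `uw ∈ E(G)` implies `uv ∈ E(G)` and `vw ∈ E(G)`. -/
def IsProperOrdering {V : Type*} [LinearOrder V] (G : SimpleGraph V) : Prop :=
  ∀ u v w : V, u < v → v < w → G.Adj u w → G.Adj u v ∧ G.Adj v w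

/-- The linear order on `V` is a transitive vertex ordering of `G`. -/
def IsTransitiveOrdering {V : Type*} [LinearOrder V] (G : SimpleGraph V) : Prop :=
  ∀ u v w : V, u < v → v < w →
    ((G.Adj u v → G.Adj v w → G.Adj u w) ∧ (G.Adj u w → G.Adj u v ∨ G.Adj v w))

/-- There is an alternating cycle of length 4 with respect to `M` in `G`. -/
def HasAltC4 {V : Type*} (G : SimpleGraph V) (M : Set (Sym2 V)) : Prop :=
  ∃ u v u' v' : V, u ≠ v ∧ u ≠ u' ∧ u ≠ v' ∧ v ≠ u' ∧ v ≠ v' ∧ u' ≠ v' ∧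
    s(u, v) ∈ M ∧ s(u', v') ∈ M ∧ G.Adj u u' ∧ G.Adj v v'

/-- `G` admits an interval representation by nonempty closed real intervals. -/
def HasIntervalRep {V : Type*} (G : SimpleGraph V) : Prop :=
  ∃ a b : V → ℝ, (∀ v, a v ≤ b v) ∧
    ∀ u v : V, u ≠ v →
      (G.Adj u v ↔ (Set.Icc (a u) (b u) ∩ Set.Icc (a v) (b v)).Nonempty)

/-- The matching `M` starts with the edge `e`. -/
def StartsWith {V : Type*} [LinearOrder V] (M : Set (Sym2 V)) (e : Sym2 V) : Prop :=
  e ∈ M ∧ ∀ f ∈ M, f ≠ e → eL e < eL f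

namespace URaux

set_option linter.unusedSectionVars false

variable {V : Type*} [LinearOrder V] {G : SimpleGraph V}

def InL (G : SimpleGraph V) (v : V) : Prop := ∃ w, v < w ∧ G.Adj v w
def InH (G : SimpleGraph V) (v : V) : Prop := ∃ u, u < v ∧ G.Adj u v

theorem LH_disjoint (htf : G.CliqueFree 3) (hord : IsTransitiveOrdering G) {v : V}
    (hL : InL G v) (hH : InH G v) : False := by
  obtain ⟨w, hvw, haw⟩ := hL
  obtain ⟨u, huv, hau⟩ := hH
  have huw : G.Adj u w := (hord u v w huv hvw).1 hau haw
  exact htf {u, v, w} (SimpleGraph.is3Clique_triple_iff.2 ⟨hau, huw, haw⟩)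

theorem adj_orient (htf : G.CliqueFree 3) (hord : IsTransitiveOrdering G) {u v : V}
    (hL : InL G u) (h : G.Adj u v) : u < v := by
  rcases lt_trichotomy u v with h' | h' | h'
  · exact h'
  · exact absurd h' h.ne
  · exact absurd ⟨v, h', h.symm⟩ (fun hH => LH_disjoint htf hord hL hH)

theorem inside_L (htf : G.CliqueFree 3) (hord : IsTransitiveOrdering G) {x y z : V}
    (hxz : G.Adj x z) (h1 : x < y) (h2 : y < z) (hy : InL G y) : G.Adj y z := by
  rcases (hord x y z h1 h2).2 hxz with h | h
  · exact absurd hy (fun hL => LH_disjoint htf hord hL ⟨x, h1, h⟩)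
  · exact h

theorem inside_H (htf : G.CliqueFree 3) (hord : IsTransitiveOrdering G) {x y z : V}
    (hxz : G.Adj x z) (h1 : x < y) (h2 : y < z) (hy : InH G y) : G.Adj x y := by
  rcases (hord x y z h1 h2).2 hxz with h | h
  · exact h
  · exact absurd hy (fun hH => LH_disjoint htf hord ⟨z, h2, h⟩ hH)

theorem period_mod {k : ℕ} (f : ℕ → V) (hp : ∀ i, f (i + k) = f i) :
    ∀ i, f i = f (i % k) := by
  intro i
  induction i using Nat.strong_induction_on with
  | _ i IH =>
    by_cases hk : 0 < k
    · by_cases h : i < k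
      · rw [Nat.mod_eq_of_lt h]
      · push_neg at h
        have h1 : i - k + k = i := Nat.sub_add_cancel h
        have h2 : i % k = (i - k) % k := by
          conv_lhs => rw [← h1]
          rw [Nat.add_mod_right]
        rw [h2, ← IH (i - k) (by omega), ← hp (i - k), h1]
    · have : k = 0 := by omega
      subst this; rw [Nat.mod_zero]

theorem mod_ne_of_lt {k a b : ℕ} (hk : 0 < k) (hle : a ≤ b) (hlt : b - a < k) (hne : a ≠ b) :
    a % k ≠ b % k := by
  intro h
  have : k ∣ b - a := (Nat.modEq_iff_dvd' hle).1 h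
  have := Nat.le_of_dvd (by omega) this
  omega

/-- The main cycle lemma: an alternating cycle yields a crossing pair. -/
theorem cycle_c4 (htf : G.CliqueFree 3) (hord : IsTransitiveOrdering G)
    {M : Set (Sym2 V)} (hM : IsMatchingSet G M) :
    ∀ k : ℕ, 2 ≤ k → ∀ l r : ℕ → V,
      (∀ i, l (i + k) = l i) → (∀ i, r (i + k) = r i) →
      (∀ i, s(l i, r i) ∈ M) → (∀ i, l i < r i) →
      (∀ i, G.Adj (l (i + 1)) (r i)) →
      (∀ i j, i < k → j < k → i ≠ j → s(l i, r i) ≠ s(l j, r j)) →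
      ∃ i j, G.Adj (l i) (r j) ∧ G.Adj (l j) (r i) ∧ s(l i, r i) ≠ s(l j, r j) := by
  intro k
  induction k using Nat.strong_induction_on with
  | _ k IH =>
  intro hk2 l r hpl hpr hMi hlr hcross hinj
  have hkpos : 0 < k := by omega
  have hlmod := period_mod l hpl
  have hrmod := period_mod r hpr
  have hadj : ∀ i, G.Adj (l i) (r i) := fun i => (G.mem_edgeSet).1 (hM.1 (hMi i))
  have hInL : ∀ i, InL G (l i) := fun i => ⟨r i, hlr i, hadj i⟩
  have hInH : ∀ i, InH G (r i) := fun i => ⟨l i, hlr i, hadj i⟩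
  have hinj' : ∀ i j, i % k ≠ j % k → s(l i, r i) ≠ s(l j, r j) := by
    intro i j h
    rw [hlmod i, hrmod i, hlmod j, hrmod j]
    exact hinj _ _ (Nat.mod_lt _ hkpos) (Nat.mod_lt _ hkpos) h
  have hvd : ∀ a b, s(l a, r a) ≠ s(l b, r b) →
      l a ≠ l b ∧ r a ≠ r b ∧ l a ≠ r b ∧ r a ≠ l b := by
    intro a b hne
    have h2 := hM.2 _ (hMi a) _ (hMi b) hne
    refine ⟨?_, ?_, ?_, ?_⟩
    · intro h; exact h2 (l a) (Sym2.mem_mk_left _ _) (by rw [h]; exact Sym2.mem_mk_left _ _)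
    · intro h; exact h2 (r a) (Sym2.mem_mk_right _ _) (by rw [h]; exact Sym2.mem_mk_right _ _)
    · intro h; exact h2 (l a) (Sym2.mem_mk_left _ _) (by rw [h]; exact Sym2.mem_mk_right _ _)
    · intro h; exact h2 (r a) (Sym2.mem_mk_right _ _) (by rw [h]; exact Sym2.mem_mk_left _ _)
  by_contra hC4
  push_neg at hC4
  -- hC4 : ∀ i j, Adj (l i) (r j) → Adj (l j) (r i) → s(l i, r i) = s(l j, r j)
  rcases eq_or_lt_of_le hk2 with hk2' | hk3
  · -- k = 2 : the two cross edges close up a C4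
    have h1 : G.Adj (l 1) (r 0) := hcross 0
    have h2 : G.Adj (l 0) (r 1) := by
      have h := hcross 1
      have e : (1 : ℕ) + 1 = 0 + k := by omega
      rw [e, hpl 0] at h
      exact h
    exact (hinj 0 1 (by omega) (by omega) (by omega)) (hC4 0 1 h2 h1)
  by_cases hshort : ∃ j i', j < i' ∧ i' + 1 < j + k ∧ G.Adj (l j) (r i')
  · -- build shorter cycle and apply IH
    obtain ⟨j, i', hji, hik, hsadj⟩ := hshort
    set k' := i' - j + 1 with hk'
    have hk'2 : 2 ≤ k' := by omega
    have hk'k : k' < k := by omega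
    have hk'pos : 0 < k' := by omega
    set l' : ℕ → V := fun m => l (j + m % k') with hl'
    set r' : ℕ → V := fun m => r (j + m % k') with hr'
    have hpl' : ∀ m, l' (m + k') = l' m := by intro m; simp only [hl', Nat.add_mod_right]
    have hpr' : ∀ m, r' (m + k') = r' m := by intro m; simp only [hr', Nat.add_mod_right]
    have hcross' : ∀ m, G.Adj (l' (m + 1)) (r' m) := by
      intro m
      simp only [hl', hr']
      rcases Nat.lt_or_ge (m % k' + 1) k' with h | h
      · have he : (m + 1) % k' = m % k' + 1 := by
          rw [Nat.add_mod, Nat.mod_eq_of_lt (show (1:ℕ) < k' by omega)]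
          exact Nat.mod_eq_of_lt h
        rw [he, ← Nat.add_assoc]
        exact hcross (j + m % k')
      · have hmk : m % k' = k' - 1 := by have := Nat.mod_lt m hk'pos; omega
        have h1 : (m + 1) % k' = 0 := by
          rw [Nat.add_mod, Nat.mod_eq_of_lt (show (1:ℕ) < k' by omega), hmk]
          have h2 : k' - 1 + 1 = k' := by omega
          rw [h2, Nat.mod_self]
        rw [h1, hmk, Nat.add_zero]
        have h3 : j + (k' - 1) = i' := by omega
        rw [h3]
        exact hsadj
    have hinj'' : ∀ m₁ m₂, m₁ < k' → m₂ < k' → m₁ ≠ m₂ →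
        s(l' m₁, r' m₁) ≠ s(l' m₂, r' m₂) := by
      intro m₁ m₂ h1 h2 hne
      simp only [hl', hr', Nat.mod_eq_of_lt h1, Nat.mod_eq_of_lt h2]
      rcases Nat.lt_or_ge m₁ m₂ with h | h
      · exact hinj' _ _ (mod_ne_of_lt hkpos (by omega) (by omega) (by omega))
      · exact (hinj' _ _ (mod_ne_of_lt hkpos (by omega) (by omega) (by omega))).symm
    obtain ⟨m₁, m₂, ha1, ha2, hne⟩ := IH k' hk'k hk'2 l' r' hpl' hpr'
      (fun m => hMi _) (fun m => hlr _) hcross' hinj''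
    exact hne (hC4 _ _ ha1 ha2)
  · -- no shortcut
    push_neg at hshort
    have hne0 : (Finset.range k).Nonempty := ⟨0, Finset.mem_range.2 hkpos⟩
    obtain ⟨i, hi_mem, hi_max⟩ := Finset.exists_max_image (Finset.range k) r hne0
    rw [Finset.mem_range] at hi_mem
    have hmax : ∀ j, r j ≤ r i := by
      intro j
      rw [hrmod j]
      exact hi_max _ (Finset.mem_range.2 (Nat.mod_lt _ hkpos))
    have F0 : ∀ j, j % k ≠ i % k → r j < r i := by
      intro j h
      exact lt_of_le_of_ne (hmax j) (hvd j i (hinj' j i h)).2.1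
    have F1 : ∀ j, j % k ≠ i % k → l j < l i := by
      intro j h
      have hrj : r j < r i := F0 j h
      have hedne := hinj' j i h
      have hvd' := hvd j i hedne
      rcases lt_trichotomy (l i) (r j) with h' | h' | h'
      · have hirj : G.Adj (l i) (r j) := inside_H htf hord (hadj i) h' hrj (hInH j)
        rcases lt_trichotomy (l j) (l i) with hh | hh | hh
        · exact hh
        · exact absurd hh hvd'.1
        · exfalso
          have hlj_lt : l j < r i := lt_trans (hlr j) hrj
          have hadj2 : G.Adj (l j) (r i) := inside_L htf hord (hadj i) hh hlj_lt (hInL j)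
          exact hedne (hC4 j i hadj2 hirj)
      · exact absurd h'.symm hvd'.2.2.2
      · exact lt_trans (hlr j) h'
    have F2 : G.Adj (l (i + 1)) (r i) := hcross i
    have F3 : G.Adj (l i) (r (i + k - 1)) := by
      have h := hcross (i + k - 1)
      have e : i + k - 1 + 1 = i + k := by omega
      rw [e, hpl i] at h
      exact h
    have F4 : l i < r (i + k - 1) := adj_orient htf hord (hInL i) F3
    set m := i + k - 1 with hm
    have hm_i : m % k ≠ i % k := (mod_ne_of_lt hkpos (by omega) (by omega) (by omega)).symm
    have F5 : r m < l (i + 1) := by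
      rcases lt_trichotomy (r m) (l (i + 1)) with h | h | h
      · exact h
      · exact absurd (hInH m) (fun hH => LH_disjoint htf hord (by rw [h]; exact hInL (i+1)) hH)
      · exfalso
        have hrm_ri : r m < r i := F0 m hm_i
        have hadj1 : G.Adj (l (i + 1)) (r m) := inside_H htf hord F2 h hrm_ri (hInH m)
        exact hshort (i + 1) m (by omega) (by omega) hadj1
    have F1' : l (i + 1) < l i :=
      F1 (i + 1) (mod_ne_of_lt hkpos (by omega) (by omega) (by omega)).symm
    exact absurd (lt_trans (lt_trans F4 F5) F1') (lt_irrefl _)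

set_option linter.unusedSectionVars false

open Classical in
noncomputable def partner {V : Type*} (M : Set (Sym2 V)) (v : V) : V :=
  if h : ∃ e ∈ M, v ∈ e then Sym2.Mem.other h.choose_spec.2 else v

variable {V : Type*} [LinearOrder V] {G : SimpleGraph V}

theorem partner_spec {M : Set (Sym2 V)} {v : V} (h : v ∈ matchedVerts M) :
    s(v, partner M v) ∈ M := by
  have h' : ∃ e ∈ M, v ∈ e := h
  rw [partner, dif_pos h', Sym2.other_spec]
  exact h'.choose_spec.1

theorem partner_eq_of_not_mem {M : Set (Sym2 V)} {v : V} (h : v ∉ matchedVerts M) :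
    partner M v = v := by
  have h' : ¬ ∃ e ∈ M, v ∈ e := h
  rw [partner, dif_neg h']

theorem edge_eq {G : SimpleGraph V} {M : Set (Sym2 V)} (hM : IsMatchingSet G M)
    {e : Sym2 V} {v : V} (he : e ∈ M) (hv : v ∈ e) : e = s(v, partner M v) := by
  have hmem : v ∈ matchedVerts M := ⟨e, he, hv⟩
  by_contra hne
  exact hM.2 e he _ (partner_spec hmem) hne v hv (Sym2.mem_mk_left _ _)

theorem partner_mem {M : Set (Sym2 V)} {v : V} (h : v ∈ matchedVerts M) :
    partner M v ∈ matchedVerts M :=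
  ⟨_, partner_spec h, Sym2.mem_mk_right _ _⟩

theorem partner_ne {M : Set (Sym2 V)} (hM : IsMatchingSet G M)
    {v : V} (h : v ∈ matchedVerts M) : partner M v ≠ v := by
  have := hM.1 (partner_spec h)
  have hd := G.not_isDiag_of_mem_edgeSet this
  intro he
  rw [he] at hd
  exact hd (Sym2.mk_isDiag_iff.2 rfl)

theorem partner_adj {M : Set (Sym2 V)} (hM : IsMatchingSet G M)
    {v : V} (h : v ∈ matchedVerts M) : G.Adj v (partner M v) := by
  have := hM.1 (partner_spec h)
  rwa [SimpleGraph.mem_edgeSet] at this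

theorem partner_partner {M : Set (Sym2 V)} (hM : IsMatchingSet G M)
    (v : V) : partner M (partner M v) = v := by
  by_cases h : v ∈ matchedVerts M
  · have he : s(v, partner M v) = s(partner M v, partner M (partner M v)) :=
      edge_eq hM (partner_spec h) (Sym2.mem_mk_right v (partner M v))
    replace he := (Sym2.mk_eq_mk_iff (p := (v, partner M v)) (q := (partner M v, partner M (partner M v)))).1 he
    rcases he with h' | h'
    · exact absurd (congrArg Prod.fst h').symm (partner_ne hM h)
    · have : v = (partner M v, partner M (partner M v)).swap.1 := congrArg Prod.fst h'
      exact this.symm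
  · rw [partner_eq_of_not_mem h, partner_eq_of_not_mem h]

theorem partner_injective {M : Set (Sym2 V)} (hM : IsMatchingSet G M) :
    Function.Injective (partner M) := by
  intro a b h
  have := congrArg (partner M) h
  rwa [partner_partner hM, partner_partner hM] at this


theorem partner_eq {M : Set (Sym2 V)} (hM : IsMatchingSet G M) {a b : V}
    (h : s(a, b) ∈ M) : partner M a = b := by
  have he := edge_eq hM h (Sym2.mem_mk_left a b)
  replace he := (Sym2.mk_eq_mk_iff (p := (a, b)) (q := (a, partner M a))).1 he
  rcases he with h' | h'
  · exact (congrArg Prod.snd h').symm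
  · exfalso
    have h1 : a = partner M a := congrArg Prod.fst h'
    exact partner_ne hM ⟨_, h, Sym2.mem_mk_left a b⟩ h1.symm

theorem two_matchings_hasC4 [Fintype V] (htf : G.CliqueFree 3)
    (hord : IsTransitiveOrdering G) {M M' : Set (Sym2 V)}
    (hM : IsMatchingSet G M) (hM' : IsMatchingSet G M')
    (hmv : matchedVerts M' = matchedVerts M) (hne : M' ≠ M) : HasAltC4 G M := by
  classical
  -- Step A: a vertex where the partners differ
  obtain ⟨x, hxm, hx⟩ : ∃ x, x ∈ matchedVerts M ∧ partner M x ≠ partner M' x := by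
    have hex : ∃ e, (e ∈ M ∧ e ∉ M') ∨ (e ∈ M' ∧ e ∉ M) := by
      by_contra h
      push_neg at h
      exact hne (Set.ext fun e => ⟨(h e).2, (h e).1⟩)
    obtain ⟨e, he⟩ := hex
    induction e using Sym2.ind with
    | _ a b =>
      rcases he with ⟨h1, h2⟩ | ⟨h1, h2⟩
      · refine ⟨a, ⟨_, h1, Sym2.mem_mk_left a b⟩, ?_⟩
        rw [partner_eq hM h1]
        intro hc
        have ham' : a ∈ matchedVerts M' := hmv ▸ (⟨_, h1, Sym2.mem_mk_left a b⟩ : a ∈ matchedVerts M)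
        have := partner_spec ham'
        rw [← hc] at this
        exact h2 this
      · have ham' : a ∈ matchedVerts M' := ⟨_, h1, Sym2.mem_mk_left a b⟩
        refine ⟨a, hmv ▸ ham', ?_⟩
        rw [partner_eq hM' h1]
        intro hc
        have ham : a ∈ matchedVerts M := hmv ▸ ham'
        have := partner_spec ham
        rw [hc] at this
        exact h2 this
  -- Step B: choose a representative in the high class
  obtain ⟨x₀, hx₀m, hx₀H, hx₀⟩ :
      ∃ z, z ∈ matchedVerts M ∧ InH G z ∧ partner M z ≠ partner M' z := by
    have hxm' : x ∈ matchedVerts M' := hmv ▸ hxm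
    have hadjx : G.Adj x (partner M' x) := partner_adj hM' hxm'
    rcases lt_trichotomy (partner M' x) x with h | h | h
    · exact ⟨x, hxm, ⟨_, h, hadjx.symm⟩, hx⟩
    · exact absurd h (partner_ne hM' hxm')
    · refine ⟨partner M' x, hmv ▸ partner_mem hxm', ⟨x, h, hadjx⟩, ?_⟩
      rw [partner_partner hM']
      intro hc
      apply hx
      have := congrArg (partner M) hc
      rw [partner_partner hM] at this
      exact this.symm
  -- Step C: the alternating walk
  set σ : V → V := fun v => partner M (partner M' v) with hσ
  have hσinj : Function.Injective σ :=
    (partner_injective hM).comp (partner_injective hM')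
  set a : ℕ → V := fun i => σ^[i] x₀ with ha
  have hastep : ∀ i, a (i + 1) = partner M (partner M' (a i)) := fun i =>
    Function.iterate_succ_apply' σ i x₀
  have amem : ∀ i, a i ∈ matchedVerts M := by
    intro i
    induction i with
    | zero => exact hx₀m
    | succ i ih =>
      rw [hastep i]
      exact partner_mem (hmv ▸ partner_mem (hmv.symm ▸ ih : a i ∈ matchedVerts M'))
  have amem' : ∀ i, a i ∈ matchedVerts M' := fun i => hmv.symm ▸ amem i
  have ane : ∀ i, partner M (a i) ≠ partner M' (a i) := by
    intro i
    induction i with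
    | zero => exact hx₀
    | succ i ih =>
      intro h
      have h1 : partner M (a (i + 1)) = partner M' (a i) := by
        rw [hastep i, partner_partner hM]
      have h2 : a (i + 1) = a i := partner_injective hM' (h.symm.trans h1)
      apply ih
      have := congrArg (partner M) ((h2.symm.trans (hastep i)).symm)
      rw [partner_partner hM] at this
      exact this.symm
  have aInH : ∀ i, InH G (a i) := by
    intro i
    induction i with
    | zero => exact hx₀H
    | succ i ih =>
      have hadj' : G.Adj (a i) (partner M' (a i)) := partner_adj hM' (amem' i)
      have hlt1 : partner M' (a i) < a i := by
        rcases lt_trichotomy (partner M' (a i)) (a i) with h | h | h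
        · exact h
        · exact absurd h (partner_ne hM' (amem' i))
        · exact absurd ih (fun hH => LH_disjoint htf hord ⟨_, h, hadj'⟩ hH)
      have hInLp : InL G (partner M' (a i)) := ⟨a i, hlt1, hadj'.symm⟩
      have hm2 : partner M' (a i) ∈ matchedVerts M := hmv ▸ partner_mem (amem' i)
      have hadj2 : G.Adj (partner M' (a i)) (partner M (partner M' (a i))) :=
        partner_adj hM hm2
      have hlt2 : partner M' (a i) < partner M (partner M' (a i)) :=
        adj_orient htf hord hInLp hadj2
      rw [hastep i]
      exact ⟨_, hlt2, hadj2⟩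
  have hlt1 : ∀ i, partner M' (a i) < a i := by
    intro i
    have hadj' : G.Adj (a i) (partner M' (a i)) := partner_adj hM' (amem' i)
    rcases lt_trichotomy (partner M' (a i)) (a i) with h | h | h
    · exact h
    · exact absurd h (partner_ne hM' (amem' i))
    · exact absurd (aInH i) (fun hH => LH_disjoint htf hord ⟨_, h, hadj'⟩ hH)
  have hInLp : ∀ i, InL G (partner M' (a i)) := fun i =>
    ⟨a i, hlt1 i, (partner_adj hM' (amem' i)).symm⟩
  have hlt2 : ∀ i, partner M' (a i) < a (i + 1) := by
    intro i
    have hm2 : partner M' (a i) ∈ matchedVerts M := hmv ▸ partner_mem (amem' i)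
    have := adj_orient htf hord (hInLp i) (partner_adj hM hm2)
    rwa [← hastep i] at this
  -- Step D: minimal period
  have hexd : ∃ d, 0 < d ∧ σ^[d] x₀ = x₀ := by
    obtain ⟨i, j, hij, hfe⟩ := Fintype.exists_ne_map_eq_of_card_lt
      (fun i : Fin (Fintype.card V + 1) => σ^[(i : ℕ)] x₀) (by simp)
    rcases Nat.lt_or_ge (i : ℕ) (j : ℕ) with h | h
    · refine ⟨(j : ℕ) - (i : ℕ), by omega, ?_⟩
      apply hσinj.iterate (i : ℕ)
      rw [← Function.iterate_add_apply, Nat.add_sub_cancel' (by omega : (i:ℕ) ≤ j)]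
      exact hfe.symm
    · have h' : (j : ℕ) < (i : ℕ) := by
        rcases Nat.lt_or_ge (j : ℕ) (i : ℕ) with h' | h'
        · exact h'
        · exact absurd (Fin.ext (by omega)) hij
      refine ⟨(i : ℕ) - (j : ℕ), by omega, ?_⟩
      apply hσinj.iterate (j : ℕ)
      rw [← Function.iterate_add_apply, Nat.add_sub_cancel' (by omega : (j:ℕ) ≤ i)]
      exact hfe
  set n := Nat.find hexd with hn
  have hnspec := Nat.find_spec hexd
  have hnmin : ∀ m, m < n → ¬(0 < m ∧ σ^[m] x₀ = x₀) := fun m hm => Nat.find_min hexd hm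
  have hn2 : 2 ≤ n := by
    rcases Nat.lt_or_ge n 2 with h | h
    · exfalso
      have h1 : n = 1 := by omega
      have h2 : σ^[1] x₀ = x₀ := by rw [← h1]; exact hnspec.2
      rw [Function.iterate_one] at h2
      apply ane 0
      have h3 := congrArg (partner M) h2
      rw [partner_partner hM] at h3
      show partner M x₀ = partner M' x₀
      exact h3.symm
    · exact h
  have hper : ∀ i, a (i + n) = a i := by
    intro i
    show σ^[i + n] x₀ = σ^[i] x₀
    rw [Function.iterate_add_apply, hnspec.2]
  have hadist : ∀ i j, i < j → j - i < n → a i ≠ a j := by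
    intro i j h1 h2 he
    have : σ^[i] (σ^[j - i] x₀) = σ^[i] x₀ := by
      rw [← Function.iterate_add_apply, Nat.add_sub_cancel' (le_of_lt h1)]
      exact he.symm
    exact hnmin (j - i) h2 ⟨by omega, hσinj.iterate i this⟩
  -- Step E: the cycle data
  set l : ℕ → V := fun i => partner M' (a i) with hl
  set r : ℕ → V := fun i => a (i + 1) with hr
  have hMi : ∀ i, s(l i, r i) ∈ M := by
    intro i
    have hm2 : partner M' (a i) ∈ matchedVerts M := hmv ▸ partner_mem (amem' i)
    have := partner_spec hm2
    rw [← hastep i] at this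
    exact this
  have hpl : ∀ i, l (i + n) = l i := fun i => congrArg (partner M') (hper i)
  have hpr : ∀ i, r (i + n) = r i := by
    intro i
    show a (i + n + 1) = a (i + 1)
    rw [show i + n + 1 = (i + 1) + n by omega, hper]
  have hcross : ∀ i, G.Adj (l (i + 1)) (r i) :=
    fun i => (partner_adj hM' (amem' (i + 1))).symm
  have hinj : ∀ i j, i < n → j < n → i ≠ j → s(l i, r i) ≠ s(l j, r j) := by
    intro i j hi hj hij he
    replace he := (Sym2.mk_eq_mk_iff (p := (l i, r i)) (q := (l j, r j))).1 he
    rcases he with h' | h'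
    · have h2 : r i = r j := congrArg Prod.snd h'
      have h3 : a (i + 1) = a (j + 1) := h2
      rcases Nat.lt_or_ge i j with h | h
      · exact hadist (i + 1) (j + 1) (by omega) (by omega) h3
      · exact hadist (j + 1) (i + 1) (by omega) (by omega) h3.symm
    · have h2 : l i = r j := congrArg Prod.fst h'
      refine LH_disjoint htf hord (hInLp i) ?_
      have h3 : InH G (r j) := aInH (j + 1)
      rw [← h2] at h3
      exact h3
  -- Step F: conclude
  obtain ⟨i, j, hA1, hA2, hEne⟩ := cycle_c4 htf hord hM n hn2 l r hpl hpr hMi hlt2 hcross hinj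
  have hd := hM.2 _ (hMi i) _ (hMi j) hEne
  have hlij : l i ≠ l j := fun h =>
    hd (l i) (Sym2.mem_mk_left _ _) (by rw [h]; exact Sym2.mem_mk_left _ _)
  have hrij : r i ≠ r j := fun h =>
    hd (r i) (Sym2.mem_mk_right _ _) (by rw [h]; exact Sym2.mem_mk_right _ _)
  have hlr' : l i ≠ r j := fun h =>
    hd (l i) (Sym2.mem_mk_left _ _) (by rw [h]; exact Sym2.mem_mk_right _ _)
  have hrl' : r i ≠ l j := fun h =>
    hd (r i) (Sym2.mem_mk_right _ _) (by rw [h]; exact Sym2.mem_mk_left _ _)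
  refine ⟨l i, r i, r j, l j, (hlt2 i).ne, hlr', hlij, hrij, hrl', ((hlt2 j).ne).symm,
    hMi i, ?_, hA1, hA2.symm⟩
  rw [Sym2.eq_swap]
  exact hMi j


theorem noC4_UR [Fintype V] (htf : G.CliqueFree 3) (hord : IsTransitiveOrdering G)
    {M : Set (Sym2 V)} (hM : IsMatchingSet G M) (h : ¬HasAltC4 G M) :
    UniquelyRestricted G M :=
  ⟨hM, fun M' hM' hmv => by
    by_contra hne
    exact h (two_matchings_hasC4 htf hord hM hM' hmv hne)⟩

theorem UR_noC4 {M : Set (Sym2 V)} (hUR : UniquelyRestricted G M) : ¬HasAltC4 G M := by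
  rintro ⟨u, v, u', v', d1, d2, d3, d4, d5, d6, he, he', a1, a2⟩
  have hM := hUR.1
  set M'' : Set (Sym2 V) := (M \ {s(u,v), s(u',v')}) ∪ {s(u,u'), s(v,v')} with hM''def
  have hexc : ∀ e ∈ M, e ∉ ({s(u,v), s(u',v')} : Set (Sym2 V)) →
      ∀ w, w ∈ e → w ∉ s(u,u') ∧ w ∉ s(v,v') := by
    intro e heM hnot w hwe
    simp only [Set.mem_insert_iff, Set.mem_singleton_iff, not_or] at hnot
    have h1 : w ∉ s(u,v) := hM.2 e heM _ he hnot.1 w hwe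
    have h2 : w ∉ s(u',v') := hM.2 e heM _ he' hnot.2 w hwe
    rw [Sym2.mem_iff] at h1 h2
    push_neg at h1 h2
    constructor
    · rw [Sym2.mem_iff]; push_neg; exact ⟨h1.1, h2.1⟩
    · rw [Sym2.mem_iff]; push_neg; exact ⟨h1.2, h2.2⟩
  have hnew_uu : ∀ w, w ∈ s(u,u') → w = u ∨ w = u' := fun w hw => Sym2.mem_iff.1 hw
  have hnew_vv : ∀ w, w ∈ s(v,v') → w = v ∨ w = v' := fun w hw => Sym2.mem_iff.1 hw
  have hmatch : IsMatchingSet G M'' := by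
    constructor
    · intro e hedge
      rcases hedge with ⟨heM, _⟩ | hnew
      · exact hM.1 heM
      · rcases hnew with h | h
        · rw [h]; exact (G.mem_edgeSet).2 a1
        · rw [Set.mem_singleton_iff] at h; rw [h]; exact (G.mem_edgeSet).2 a2
    · intro e heM'' f hfM'' hnef w hwe
      rcases heM'' with ⟨heM, heX⟩ | heNew
      · rcases hfM'' with ⟨hfM, _⟩ | hfNew
        · exact hM.2 e heM f hfM hnef w hwe
        · rcases hfNew with h | h
          · rw [h]; exact (hexc e heM heX w hwe).1
          · rw [Set.mem_singleton_iff] at h; rw [h]; exact (hexc e heM heX w hwe).2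
      · rcases hfM'' with ⟨hfM, hfX⟩ | hfNew
        · intro hwf
          rcases heNew with h | h
          · rw [h] at hwe; exact (hexc f hfM hfX w hwf).1 hwe
          · rw [Set.mem_singleton_iff] at h; rw [h] at hwe; exact (hexc f hfM hfX w hwf).2 hwe
        · rcases heNew with h | h
          · rcases hfNew with h' | h'
            · exact absurd (h.trans h'.symm) hnef
            · rw [Set.mem_singleton_iff] at h'
              rw [h] at hwe; rw [h']
              intro hwf
              rcases hnew_uu w hwe with rfl | rfl <;> rcases hnew_vv w hwf with h3 | h3
              · exact d1 h3
              · exact d3 h3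
              · exact d4 h3.symm
              · exact d6 h3
          · rw [Set.mem_singleton_iff] at h
            rcases hfNew with h' | h'
            · rw [h] at hwe; rw [h']
              intro hwf
              rcases hnew_vv w hwe with rfl | rfl <;> rcases hnew_uu w hwf with h3 | h3
              · exact d1 h3.symm
              · exact d4 h3
              · exact d3 h3.symm
              · exact d6 h3.symm
            · rw [Set.mem_singleton_iff] at h'
              exact absurd (h.trans h'.symm) hnef
  have hverts : matchedVerts M'' = matchedVerts M := by
    ext w
    constructor
    · rintro ⟨e, heM'', hwe⟩
      rcases heM'' with ⟨heM, _⟩ | heNew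
      · exact ⟨e, heM, hwe⟩
      · rcases heNew with h | h
        · rw [h] at hwe
          rcases hnew_uu w hwe with rfl | rfl
          · exact ⟨_, he, Sym2.mem_mk_left _ _⟩
          · exact ⟨_, he', Sym2.mem_mk_left _ _⟩
        · rw [Set.mem_singleton_iff] at h
          rw [h] at hwe
          rcases hnew_vv w hwe with rfl | rfl
          · exact ⟨_, he, Sym2.mem_mk_right _ _⟩
          · exact ⟨_, he', Sym2.mem_mk_right _ _⟩
    · rintro ⟨e, heM, hwe⟩
      by_cases h1 : e = s(u,v)
      · rw [h1] at hwe
        rcases Sym2.mem_iff.1 hwe with h | h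
        · exact ⟨s(u,u'), Or.inr (Or.inl rfl), by rw [h]; exact Sym2.mem_mk_left _ _⟩
        · exact ⟨s(v,v'), Or.inr (Or.inr rfl), by rw [h]; exact Sym2.mem_mk_left _ _⟩
      by_cases h2 : e = s(u',v')
      · rw [h2] at hwe
        rcases Sym2.mem_iff.1 hwe with h | h
        · exact ⟨s(u,u'), Or.inr (Or.inl rfl), by rw [h]; exact Sym2.mem_mk_right _ _⟩
        · exact ⟨s(v,v'), Or.inr (Or.inr rfl), by rw [h]; exact Sym2.mem_mk_right _ _⟩
      · exact ⟨e, Or.inl ⟨heM, by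
          simp only [Set.mem_insert_iff, Set.mem_singleton_iff, not_or]
          exact ⟨h1, h2⟩⟩, hwe⟩
  have hMne : M'' ≠ M := by
    intro hEq
    have hmem : s(u,u') ∈ M'' := Or.inr (Or.inl rfl)
    rw [hEq] at hmem
    have hne' : s(u,v) ≠ s(u,u') := by
      intro h
      rw [Sym2.eq_iff] at h
      rcases h with ⟨_, h⟩ | ⟨h, _⟩
      · exact d4 h
      · exact d2 h
    exact hM.2 _ he _ hmem hne' u (Sym2.mem_mk_left _ _) (Sym2.mem_mk_left _ _)
  exact hMne (hUR.2 M'' hmatch hverts)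

theorem pair_matching {M : Set (Sym2 V)} (hM : IsMatchingSet G M) {e e' : Sym2 V}
    (he : e ∈ M) (he' : e' ∈ M) : IsMatchingSet G {e, e'} := by
  constructor
  · intro f hf
    rcases hf with h | h
    · rw [h]; exact hM.1 he
    · rw [Set.mem_singleton_iff] at h; rw [h]; exact hM.1 he'
  · intro f hf g hg hne w hw
    have hfM : f ∈ M := by
      rcases hf with h | h
      · rw [h]; exact he
      · rw [Set.mem_singleton_iff] at h; rw [h]; exact he'
    have hgM : g ∈ M := by
      rcases hg with h | h
      · rw [h]; exact he
      · rw [Set.mem_singleton_iff] at h; rw [h]; exact he'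
    exact hM.2 f hfM g hgM hne w hw

theorem hasC4_mono {M₀ M : Set (Sym2 V)} (hsub : M₀ ⊆ M) (h : HasAltC4 G M₀) :
    HasAltC4 G M := by
  obtain ⟨u, v, u', v', d1, d2, d3, d4, d5, d6, he, he', a1, a2⟩ := h
  exact ⟨u, v, u', v', d1, d2, d3, d4, d5, d6, hsub he, hsub he', a1, a2⟩

end URaux

theorem stmt15 {V : Type*} [Fintype V] [LinearOrder V] (G : SimpleGraph V)
    (htf : G.CliqueFree 3) (hord : IsTransitiveOrdering G)
    (M : Set (Sym2 V)) (hM : IsMatchingSet G M) :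
    (UniquelyRestricted G M ↔ ¬ HasAltC4 G M) ∧
      (UniquelyRestricted G M ↔
        ∀ e ∈ M, ∀ e' ∈ M, e ≠ e' → UniquelyRestricted G {e, e'}) := by
  have hA : UniquelyRestricted G M → ¬ HasAltC4 G M := URaux.UR_noC4
  have hB : ¬ HasAltC4 G M → UniquelyRestricted G M := URaux.noC4_UR htf hord hM
  refine ⟨⟨hA, hB⟩, ⟨?_, ?_⟩⟩
  · intro hUR e he e' he' hne
    have hpm := URaux.pair_matching hM he he'
    apply URaux.noC4_UR htf hord hpm
    intro hC4p
    apply hA hUR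
    refine URaux.hasC4_mono ?_ hC4p
    intro f hf
    rcases hf with h | h
    · rw [h]; exact he
    · rw [Set.mem_singleton_iff] at h; rw [h]; exact he'
  · intro h3
    apply hB
    intro hC4
    obtain ⟨u, v, u', v', d1, d2, d3, d4, d5, d6, he, he', a1, a2⟩ := hC4
    have hne : s(u, v) ≠ s(u', v') := by
      intro h
      rw [Sym2.eq_iff] at h
      rcases h with ⟨h, _⟩ | ⟨h, _⟩
      · exact d2 h
      · exact d3 h
    have hUR := h3 _ he _ he' hne
    apply URaux.UR_noC4 hUR
    exact ⟨u, v, u', v', d1, d2, d3, d4, d5, d6, Or.inl rfl, Or.inr rfl, a1, a2⟩
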